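/- For every n ≥ 2, the n-tuple consisting of the n distinct real roots of the probabilist Hermite polynomial He_n is a global minimizer of the energy E(x_1, …, x_n) = Σ_{1 ≤ i < j ≤ n} log(1/|x_i − x_j|) + (1/4)·Σ_{i=1}^{n} x_i² over all n-tuples (x_1, …, x_n) of pairwise distinct real numbers. -/

import Mathlib

open Polynomial Real Finset

lemma hermite_deriv' (n : ℕ) :
    derivative (hermite (n + 1)) = (n + 1 : ℤ[X]) * hermite n := by
  induction n with
  | zero => simp [hermite_one]
  | succ n ih =>
    rw [hermite_succ (n + 1), derivative_sub, derivative_mul, derivative_X, one_mul, ih,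
      derivative_mul, hermite_succ n]
    simp only [derivative_add, derivative_natCast, derivative_one]
    push_cast
    ring

lemma hermite_ode (n : ℕ) (hn : 1 ≤ n) :
    derivative (derivative (hermite n)) - X * derivative (hermite n)
      + (n : ℤ[X]) * hermite n = 0 := by
  rcases n with _ | m
  · omega
  rw [hermite_deriv' m, derivative_mul]
  rcases m with _ | k
  · simp [hermite_one]
  · rw [hermite_deriv' k, hermite_succ (k + 1), hermite_deriv' k]
    simp only [derivative_add, derivative_natCast, derivative_one]
    push_cast
    ring

lemma hermite_ode_real (n : ℕ) (hn : 1 ≤ n) :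
    derivative (derivative ((hermite n).map (Int.castRingHom ℝ)))
      - X * derivative ((hermite n).map (Int.castRingHom ℝ))
      + C (n : ℝ) * (hermite n).map (Int.castRingHom ℝ) = 0 := by
  have h := congrArg (Polynomial.map (Int.castRingHom ℝ)) (hermite_ode n hn)
  simpa [Polynomial.derivative_map, Polynomial.map_add, Polynomial.map_sub, Polynomial.map_mul,
    Polynomial.map_natCast, map_X, Polynomial.C_eq_natCast] using h

lemma ode_unique (n : ℕ) (hn : 1 ≤ n) (p : ℝ[X]) (hmonic : p.Monic) (hdeg : p.natDegree = n)
    (hode : derivative (derivative p) - X * derivative p + C (n : ℝ) * p = 0) :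
    p = (hermite n).map (Int.castRingHom ℝ) := by
  set P : ℝ[X] := (hermite n).map (Int.castRingHom ℝ) with hP
  have hPmonic : P.Monic := (hermite_monic n).map _
  have hPdeg : P.natDegree = n := by
    rw [hP, (hermite_monic n).natDegree_map, natDegree_hermite]
  by_contra hne
  set d : ℝ[X] := p - P with hd
  have hd0 : d ≠ 0 := sub_ne_zero.mpr hne
  have hdegd : d.natDegree < n := by
    have h1 : d.degree < p.degree := by
      apply degree_sub_lt
      · rw [degree_eq_natDegree hmonic.ne_zero, degree_eq_natDegree hPmonic.ne_zero, hdeg, hPdeg]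
      · exact hmonic.ne_zero
      · rw [hmonic.leadingCoeff, hPmonic.leadingCoeff]
    have := natDegree_lt_natDegree hd0 h1
    omega
  have hoded : derivative (derivative d) - X * derivative d + C (n : ℝ) * d = 0 := by
    have h2 := hermite_ode_real n hn
    rw [hd, derivative_sub, derivative_sub]
    rw [← hP] at h2
    linear_combination hode - h2
  set m := d.natDegree with hm
  have hcoeff := congrArg (fun q : ℝ[X] => q.coeff m) hoded
  simp only [coeff_add, coeff_sub, coeff_zero] at hcoeff
  have h3 : (derivative (derivative d)).coeff m = 0 := by
    rw [coeff_derivative, coeff_derivative]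
    rw [coeff_eq_zero_of_natDegree_lt (by omega : d.natDegree < m + 1 + 1)]
    ring
  have h4 : (X * derivative d).coeff m = m * d.coeff m := by
    rcases m with _ | k
    · simp
    · rw [coeff_X_mul, coeff_derivative]
      push_cast
      ring
  have h5 : (C (n : ℝ) * d).coeff m = n * d.coeff m := coeff_C_mul _
  rw [h3, h4, h5] at hcoeff
  have h6 : d.coeff m ≠ 0 := by
    rw [hm]
    exact leadingCoeff_ne_zero.mpr hd0
  have h7 : (n : ℝ) ≠ (m : ℝ) := by
    exact_mod_cast Nat.ne_of_gt hdegd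
  have : ((n : ℝ) - m) * d.coeff m = 0 := by linarith
  rcases mul_eq_zero.mp this with h | h
  · exact h7 (by linarith)
  · exact h6 h

lemma crit_eq_hermite (n : ℕ) (hn : 2 ≤ n) (x : Fin n → ℝ) (hx : Function.Injective x)
    (hcrit : ∀ i, 2 * (derivative (∏ j ∈ Finset.univ.erase i, (X - C (x j)))).eval (x i)
        = x i * (∏ j ∈ Finset.univ.erase i, (X - C (x j))).eval (x i)) :
    ∏ j, (X - C (x j)) = (hermite n).map (Int.castRingHom ℝ) := by
  set p : ℝ[X] := ∏ j, (X - C (x j)) with hpdef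
  have hmonic : p.Monic := monic_prod_of_monic _ _ fun j _ => monic_X_sub_C _
  have hdeg : p.natDegree = n := by
    rw [hpdef, natDegree_prod _ _ fun j _ => X_sub_C_ne_zero _]
    simp
  set Q : ℝ[X] := derivative (derivative p) - X * derivative p + C (n : ℝ) * p with hQdef
  -- evaluation of Q at each x i is zero
  have hQeval : ∀ i, Q.eval (x i) = 0 := by
    intro i
    set q : ℝ[X] := ∏ j ∈ Finset.univ.erase i, (X - C (x j)) with hqdef
    have hpq : p = (X - C (x i)) * q := by
      rw [hpdef, hqdef, ← Finset.mul_prod_erase _ _ (Finset.mem_univ i)]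
    have hvp : p.eval (x i) = 0 := by
      rw [hpq]; simp
    have hd1 : derivative p = q + (X - C (x i)) * derivative q := by
      rw [hpq, derivative_mul, derivative_sub, derivative_X, derivative_C, sub_zero, one_mul]
    have hv1 : (derivative p).eval (x i) = q.eval (x i) := by
      rw [hd1]; simp
    have hd2 : derivative (derivative p)
        = derivative q + (derivative q + (X - C (x i)) * derivative (derivative q)) := by
      rw [hd1, derivative_add, derivative_mul, derivative_sub, derivative_X, derivative_C,
        sub_zero, one_mul]
    have hv2 : (derivative (derivative p)).eval (x i) = 2 * (derivative q).eval (x i) := by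
      rw [hd2]; simp; ring
    rw [hQdef]
    simp only [eval_add, eval_sub, eval_mul, eval_X, eval_C, hvp, hv1, hv2, mul_zero, add_zero]
    rw [hcrit i]
    ring
  -- Q has low degree
  have hcle : ∀ k, n ≤ k → Q.coeff k = 0 := by
    intro k hk
    have hdd : (derivative (derivative p)).coeff k = 0 := by
      rw [coeff_derivative, coeff_derivative,
        coeff_eq_zero_of_natDegree_lt (by omega : p.natDegree < k + 1 + 1)]
      ring
    have hxp : (X * derivative p).coeff k = k * p.coeff k := by
      rcases k with _ | k'
      · omega
      · rw [coeff_X_mul, coeff_derivative]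
        push_cast
        ring
    have hQc : Q.coeff k = -(k * p.coeff k) + n * p.coeff k := by
      rw [hQdef]
      simp only [coeff_add, coeff_sub, coeff_C_mul, hdd, hxp]
      ring
    rcases eq_or_lt_of_le hk with h | h
    · have : p.coeff k = 1 := by
        rw [← h, ← hdeg]
        exact hmonic.coeff_natDegree
      rw [hQc, this, ← h]
      ring
    · rw [hQc, coeff_eq_zero_of_natDegree_lt (by omega : p.natDegree < k)]
      ring
  have hQdeg : Q.natDegree < n := by
    by_contra h
    push_neg at h
    rcases eq_or_ne Q 0 with h0 | h0
    · rw [h0, natDegree_zero] at h; omega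
    · exact leadingCoeff_ne_zero.mpr h0 (hcle _ h)
  have hQ0 : Q = 0 := by
    apply Polynomial.eq_zero_of_natDegree_lt_card_of_eval_eq_zero Q hx hQeval
    simpa using hQdeg
  exact ode_unique n (by omega) p hmonic hdeg (by rw [← hQdef, hQ0])

noncomputable def Gfun (n : ℕ) (x : Fin n → ℝ) : ℝ :=
  (∏ i, ∏ j ∈ Finset.univ.erase i, (x i - x j) ^ 2) * Real.exp (-∑ i, x i ^ 2)

lemma Gfun_cont (n : ℕ) : Continuous (Gfun n) := by
  apply Continuous.mul
  · exact continuous_finset_prod _ fun i _ => continuous_finset_prod _ fun j _ =>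
      ((continuous_apply i).sub (continuous_apply j)).pow 2
  · exact Real.continuous_exp.comp (continuous_finset_sum _ fun i _ =>
      (continuous_apply i).pow 2).neg

lemma Gfun_pos {n : ℕ} {x : Fin n → ℝ} (hx : Function.Injective x) : 0 < Gfun n x := by
  apply mul_pos _ (Real.exp_pos _)
  apply Finset.prod_pos
  intro i _
  apply Finset.prod_pos
  intro j hj
  have hij : j ≠ i := (Finset.mem_erase.mp hj).1
  have : x i - x j ≠ 0 := sub_ne_zero.mpr (fun h => hij (hx h.symm))
  positivity

lemma Gfun_le (n : ℕ) (x : Fin n → ℝ) :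
    Gfun n x ≤ (4 * ∑ i, x i ^ 2) ^ ((n - 1) * n) * Real.exp (-∑ i, x i ^ 2) := by
  set S := ∑ i, x i ^ 2 with hS
  have hS0 : 0 ≤ S := Finset.sum_nonneg fun i _ => sq_nonneg _
  have hsq : ∀ i, x i ^ 2 ≤ S := fun i =>
    Finset.single_le_sum (fun j _ => sq_nonneg (x j)) (Finset.mem_univ i)
  apply mul_le_mul_of_nonneg_right _ (Real.exp_pos _).le
  calc ∏ i, ∏ j ∈ Finset.univ.erase i, (x i - x j) ^ 2
      ≤ ∏ i : Fin n, ∏ j ∈ Finset.univ.erase i, (4 * S) := by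
        apply Finset.prod_le_prod (fun i _ => Finset.prod_nonneg fun j _ => sq_nonneg _)
        intro i _
        apply Finset.prod_le_prod (fun j _ => sq_nonneg _)
        intro j _
        nlinarith [hsq i, hsq j, sq_nonneg (x i + x j)]
    _ = (4 * S) ^ ((n - 1) * n) := by
        simp only [Finset.prod_const, Finset.card_erase_of_mem (Finset.mem_univ _),
          Finset.card_univ, Fintype.card_fin, ← pow_mul]
lemma Gfun_perm {n : ℕ} (x : Fin n → ℝ) (σ : Equiv.Perm (Fin n)) :
    Gfun n (x ∘ σ) = Gfun n x := by
  unfold Gfun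
  congr 1
  · calc ∏ i, ∏ j ∈ Finset.univ.erase i, ((x ∘ σ) i - (x ∘ σ) j) ^ 2
        = ∏ i, ∏ j ∈ Finset.univ.erase (σ i), (x (σ i) - x j) ^ 2 := by
          apply Finset.prod_congr rfl
          intro i _
          apply Finset.prod_nbij' (fun j => σ j) (fun j => σ.symm j)
          · intro j hj
            simp only [Finset.mem_erase, Finset.mem_univ, and_true] at *
            exact fun h => hj (σ.injective h)
          · intro j hj
            simp only [Finset.mem_erase, Finset.mem_univ, and_true] at *
            exact fun h => hj (by rw [← h]; simp)
          · intro j _; simp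
          · intro j _; simp
          · intro j _; rfl
      _ = ∏ i, ∏ j ∈ Finset.univ.erase i, (x i - x j) ^ 2 :=
          Equiv.prod_comp σ (fun a => ∏ j ∈ Finset.univ.erase a, (x a - x j) ^ 2)
  · congr 1
    congr 1
    exact Equiv.sum_comp σ (fun a => x a ^ 2)

lemma Gfun_slice (n : ℕ) (x : Fin n → ℝ) (i : Fin n) (t : ℝ) :
    Gfun n (Function.update x i t) =
      ((∏ a ∈ Finset.univ.erase i, ∏ b ∈ (Finset.univ.erase a).erase i, (x a - x b) ^ 2) *
        Real.exp (-(∑ a ∈ Finset.univ.erase i, x a ^ 2))) *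
      ((∏ j ∈ Finset.univ.erase i, (X - C (x j))).eval t ^ 4 * Real.exp (-(t ^ 2))) := by
  set u := Function.update x i t with hu
  have hui : u i = t := Function.update_self i t x
  have hua : ∀ a, a ≠ i → u a = x a := fun a ha => Function.update_of_ne ha t x
  have hq : ∀ s : ℝ, (∏ j ∈ Finset.univ.erase i, (X - C (x j))).eval s
      = ∏ j ∈ Finset.univ.erase i, (s - x j) := by
    intro s; rw [eval_prod]; exact Finset.prod_congr rfl fun j _ => by simp
  have hsum : ∑ a, u a ^ 2 = t ^ 2 + ∑ a ∈ Finset.univ.erase i, x a ^ 2 := by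
    rw [← Finset.add_sum_erase _ _ (Finset.mem_univ i), hui]
    congr 1
    exact Finset.sum_congr rfl fun a ha => by rw [hua a (Finset.mem_erase.mp ha).1]
  have hprod : (∏ a, ∏ b ∈ Finset.univ.erase a, (u a - u b) ^ 2)
      = ((∏ j ∈ Finset.univ.erase i, (t - x j)) ^ 2) *
        (((∏ a ∈ Finset.univ.erase i, (t - x a)) ^ 2) *
          ∏ a ∈ Finset.univ.erase i, ∏ b ∈ (Finset.univ.erase a).erase i, (x a - x b) ^ 2) := by
    rw [← Finset.mul_prod_erase _ _ (Finset.mem_univ i)]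
    congr 1
    · -- the a = i factor
      rw [← Finset.prod_pow]
      apply Finset.prod_congr rfl
      intro b hb
      rw [hui, hua b (Finset.mem_erase.mp hb).1]
    · -- the a ≠ i factors
      have : ∀ a ∈ Finset.univ.erase i, (∏ b ∈ Finset.univ.erase a, (u a - u b) ^ 2)
          = (t - x a) ^ 2 * ∏ b ∈ (Finset.univ.erase a).erase i, (x a - x b) ^ 2 := by
        intro a ha
        have hai : a ≠ i := (Finset.mem_erase.mp ha).1
        have hi_mem : i ∈ Finset.univ.erase a := Finset.mem_erase.mpr ⟨fun h => hai h.symm, Finset.mem_univ _⟩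
        rw [← Finset.mul_prod_erase _ _ hi_mem, hui, hua a hai]
        congr 1
        · ring
        · apply Finset.prod_congr rfl
          intro b hb
          rw [hua b (Finset.mem_erase.mp hb).1]
      rw [Finset.prod_congr rfl this, Finset.prod_mul_distrib, ← Finset.prod_pow]
  unfold Gfun
  rw [hsum, hprod, hq, neg_add, Real.exp_add]
  ring

lemma pair_sum {n : ℕ} (f : Fin n → Fin n → ℝ) (hf : ∀ i j, f i j = f j i) :
    ∑ i, ∑ j ∈ Finset.univ.erase i, f i j = ∑ i, ∑ j ∈ Finset.Ioi i, 2 * f i j := by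
  have key := Finset.sum_sum_Ioi_add_eq_sum_sum_off_diag f
  calc ∑ i, ∑ j ∈ Finset.univ.erase i, f i j
      = ∑ i, ∑ j ∈ ({i}ᶜ : Finset (Fin n)), f j i := by
        apply Finset.sum_congr rfl
        intro i _
        have h : ({i}ᶜ : Finset (Fin n)) = Finset.univ.erase i := Finset.compl_singleton i
        rw [h]
        exact Finset.sum_congr rfl fun j _ => hf i j
    _ = ∑ i, ∑ j ∈ Finset.Ioi i, (f j i + f i j) := by
        convert key.symm using 3 with i hi
    _ = ∑ i, ∑ j ∈ Finset.Ioi i, 2 * f i j :=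
        Finset.sum_congr rfl fun i _ => Finset.sum_congr rfl fun j _ => by rw [hf i j]; ring

lemma Gfun_log {n : ℕ} {y : Fin n → ℝ} (hy : Function.Injective y) :
    Real.log (Gfun n y) =
      4 * (∑ i, ∑ j ∈ Finset.Ioi i, Real.log |y i - y j|) - ∑ i, y i ^ 2 := by
  have hne : ∀ i j : Fin n, i ≠ j → y i - y j ≠ 0 := fun i j hij =>
    sub_ne_zero.mpr (fun h => hij (hy h))
  have hfacne : ∀ i j : Fin n, j ≠ i → (y i - y j) ^ 2 ≠ 0 := fun i j hj =>
    pow_ne_zero 2 (hne i j (fun h => hj h.symm))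
  have hprodne : ∀ i : Fin n, (∏ j ∈ Finset.univ.erase i, (y i - y j) ^ 2) ≠ 0 := by
    intro i
    exact Finset.prod_ne_zero_iff.mpr fun j hj => hfacne i j (Finset.mem_erase.mp hj).1
  unfold Gfun
  rw [Real.log_mul (Finset.prod_ne_zero_iff.mpr fun i _ => hprodne i) (Real.exp_ne_zero _),
    Real.log_exp, Real.log_prod fun i _ => hprodne i]
  have h1 : ∀ i ∈ (Finset.univ : Finset (Fin n)),
      Real.log (∏ j ∈ Finset.univ.erase i, (y i - y j) ^ 2)
      = ∑ j ∈ Finset.univ.erase i, Real.log ((y i - y j) ^ 2) := fun i _ =>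
    Real.log_prod fun j hj => hfacne i j (Finset.mem_erase.mp hj).1
  rw [Finset.sum_congr rfl h1]
  rw [pair_sum (fun a b => Real.log ((y a - y b) ^ 2))
    (fun a b => by rw [show (y a - y b) ^ 2 = (y b - y a) ^ 2 from by ring])]
  have h3 : ∀ (i j : Fin n), 2 * Real.log ((y i - y j) ^ 2) = 4 * Real.log |y i - y j| := by
    intro i j
    rw [Real.log_pow, ← Real.log_abs]
    push_cast
    ring
  rw [Finset.sum_congr rfl fun i _ => Finset.sum_congr rfl fun j _ => h3 i j]
  rw [Finset.mul_sum]
  congr 1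
  exact Finset.sum_congr rfl fun i _ => by rw [Finset.mul_sum]

/-- **Stieltjes' electrostatic characterization of Hermite zeros.**
For `n ≥ 2`, the tuple of the `n` distinct real roots of the probabilist Hermite
polynomial `He_n` globally minimizes the energy
`E(x) = ∑_{i<j} log(1/|x_i - x_j|) + (1/4) ∑_i x_i²`
over all tuples of pairwise distinct real numbers. -/
theorem hermite_roots_minimize_energy (n : ℕ) (hn : 2 ≤ n)
    (r : Fin n → ℝ) (hmono : StrictMono r)
    (hroot : ∀ i : Fin n, Polynomial.aeval (r i) (Polynomial.hermite n) = 0)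
    (hall : ∀ t : ℝ, Polynomial.aeval t (Polynomial.hermite n) = 0 → ∃ i : Fin n, t = r i) :
    ∀ y : Fin n → ℝ, Function.Injective y →
      (∑ i : Fin n, ∑ j ∈ Finset.Ioi i, Real.log (1 / |r i - r j|)) +
          (1 / 4) * ∑ i : Fin n, (r i) ^ 2 ≤
        (∑ i : Fin n, ∑ j ∈ Finset.Ioi i, Real.log (1 / |y i - y j|)) +
          (1 / 4) * ∑ i : Fin n, (y i) ^ 2 := by
  intro y hy
  have hrinj : Function.Injective r := hmono.injective
  have hGr : 0 < Gfun n r := Gfun_pos hrinj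
  set K := (n - 1) * n with hK
  have htend : Filter.Tendsto (fun S : ℝ => (4 * S) ^ K * Real.exp (-S)) Filter.atTop (nhds 0) := by
    have h := (Real.tendsto_pow_mul_exp_neg_atTop_nhds_zero K).const_mul ((4 : ℝ) ^ K)
    rw [mul_zero] at h
    refine h.congr fun S => ?_
    rw [mul_pow]; ring
  have hev : ∀ᶠ S in Filter.atTop, (4 * S) ^ K * Real.exp (-S) < Gfun n r :=
    htend.eventually_lt_const hGr
  obtain ⟨S₀, hS₀⟩ := Filter.eventually_atTop.mp hev
  set Sf : (Fin n → ℝ) → ℝ := fun x => ∑ i, x i ^ 2 with hSf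
  set S₁ := max S₀ (Sf r) with hS₁
  set Cset := {x : Fin n → ℝ | Sf x ≤ S₁} with hCset
  have hSfcont : Continuous Sf := continuous_finset_sum _ fun i _ => (continuous_apply i).pow 2
  have hclosed : IsClosed Cset := IsClosed.preimage hSfcont isClosed_Iic
  have hbdd : Bornology.IsBounded Cset := by
    apply isBounded_iff_forall_norm_le.mpr
    refine ⟨Real.sqrt (max S₁ 0), fun x hx => ?_⟩
    apply pi_norm_le_iff_of_nonneg (Real.sqrt_nonneg _) |>.mpr
    intro i
    rw [Real.norm_eq_abs, ← Real.sqrt_sq_eq_abs]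
    apply Real.sqrt_le_sqrt
    have h1 : x i ^ 2 ≤ Sf x := Finset.single_le_sum (fun j _ => sq_nonneg (x j)) (Finset.mem_univ i)
    have h2 : Sf x ≤ S₁ := hx
    exact le_trans (le_trans h1 h2) (le_max_left _ _)
  have hcompact : IsCompact Cset := Metric.isCompact_of_isClosed_isBounded hclosed hbdd
  have hrC : r ∈ Cset := by
    show Sf r ≤ S₁
    exact le_max_right _ _
  obtain ⟨z, hzC, hzmax⟩ := hcompact.exists_isMaxOn ⟨r, hrC⟩ (Gfun_cont n).continuousOn
  have hGrz : Gfun n r ≤ Gfun n z := hzmax hrC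
  have hbound : ∀ x : Fin n → ℝ, S₀ ≤ Sf x → Gfun n x < Gfun n r := fun x hx =>
    lt_of_le_of_lt (Gfun_le n x) (hS₀ _ hx)
  have hglobal : ∀ x : Fin n → ℝ, Gfun n x ≤ Gfun n z := by
    intro x
    by_cases hxC : x ∈ Cset
    · exact hzmax hxC
    · have h1 : S₁ < Sf x := not_le.mp hxC
      have h2 : S₀ ≤ Sf x := le_trans (le_max_left _ _) h1.le
      linarith [hbound x h2]
  have hSz : Sf z < S₀ := by
    by_contra h
    push_neg at h
    linarith [hbound z h]
  have hzinj : Function.Injective z := by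
    by_contra h
    obtain ⟨a, b, hab, hne⟩ := Function.not_injective_iff.mp h
    have hz0 : Gfun n z = 0 := by
      unfold Gfun
      apply mul_eq_zero_of_left
      apply Finset.prod_eq_zero (Finset.mem_univ a)
      apply Finset.prod_eq_zero (Finset.mem_erase.mpr ⟨fun hh => hne hh.symm, Finset.mem_univ b⟩)
      rw [hab]; ring
    linarith
  have hopen : IsOpen {x : Fin n → ℝ | Sf x < S₁} := isOpen_lt hSfcont continuous_const
  have hzU : Sf z < S₁ := lt_of_lt_of_le hSz (le_max_left _ _)
  have hlocal : IsLocalMax (Gfun n) z :=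
    hzmax.isLocalMax (Filter.mem_of_superset (hopen.mem_nhds hzU) fun x hx =>
      Set.mem_setOf_eq ▸ le_of_lt hx)
  -- first-order conditions
  have hcrit : ∀ i, 2 * (derivative (∏ j ∈ Finset.univ.erase i, (X - C (z j)))).eval (z i)
      = z i * (∏ j ∈ Finset.univ.erase i, (X - C (z j))).eval (z i) := by
    intro i
    set qp : ℝ[X] := ∏ j ∈ Finset.univ.erase i, (X - C (z j)) with hqp
    set c : ℝ := (∏ a ∈ Finset.univ.erase i, ∏ b ∈ (Finset.univ.erase a).erase i, (z a - z b) ^ 2) *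
      Real.exp (-(∑ a ∈ Finset.univ.erase i, z a ^ 2)) with hc
    have hcpos : 0 < c := by
      apply mul_pos _ (Real.exp_pos _)
      apply Finset.prod_pos
      intro a _
      apply Finset.prod_pos
      intro b hb
      have hba : b ≠ a := (Finset.mem_erase.mp (Finset.mem_erase.mp hb).2).1
      have : z a - z b ≠ 0 := sub_ne_zero.mpr fun hh => hba (hzinj hh.symm)
      positivity
    have hupdate : Function.update z i (z i) = z := Function.update_eq_self i z
    have hcont : Continuous (fun t : ℝ => Function.update z i t) := by
      apply continuous_pi
      intro j
      simp only [Function.update_apply]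
      exact Continuous.if_const _ continuous_id continuous_const
    have ht : Filter.Tendsto (fun t => Function.update z i t) (nhds (z i)) (nhds z) := by
      have h := hcont.tendsto (z i)
      rwa [hupdate] at h
    have hslice : IsLocalMax (fun t => Gfun n (Function.update z i t)) (z i) := by
      have hmf : IsMaxFilter (Gfun n) (nhds z) (Function.update z i (z i)) := by
        rw [hupdate]; exact hlocal
      exact hmf.comp_tendsto ht
    have hderiv0 : deriv (fun t => Gfun n (Function.update z i t)) (z i) = 0 :=
      hslice.deriv_eq_zero
    have heq : (fun t => Gfun n (Function.update z i t))
        = fun t => c * (qp.eval t ^ 4 * Real.exp (-(t ^ 2))) := funext fun t => Gfun_slice n z i t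
    set q0 := qp.eval (z i) with hq0def
    set q1 := (derivative qp).eval (z i) with hq1def
    have hHD : HasDerivAt (fun t => c * (qp.eval t ^ 4 * Real.exp (-(t ^ 2))))
        (c * ((4 * q0 ^ 3 * q1) * Real.exp (-(z i ^ 2))
          + q0 ^ 4 * (Real.exp (-(z i ^ 2)) * -(2 * z i)))) (z i) := by
      have h1 : HasDerivAt (fun t : ℝ => qp.eval t ^ 4) (4 * q0 ^ 3 * q1) (z i) := by
        simpa using (Polynomial.hasDerivAt qp (z i)).fun_pow 4
      have h2 : HasDerivAt (fun t : ℝ => Real.exp (-(t ^ 2)))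
          (Real.exp (-(z i ^ 2)) * -(2 * z i)) (z i) := by
        have hp : HasDerivAt (fun t : ℝ => -(t ^ 2)) (-(2 * z i)) (z i) := by
          simpa using (hasDerivAt_pow 2 (z i)).fun_neg
        exact hp.exp
      exact (h1.mul h2).const_mul c
    have h0 : c * ((4 * q0 ^ 3 * q1) * Real.exp (-(z i ^ 2))
        + q0 ^ 4 * (Real.exp (-(z i ^ 2)) * -(2 * z i))) = 0 := by
      rw [← hHD.deriv, ← heq]
      exact hderiv0
    have hq0ne : q0 ≠ 0 := by
      rw [hq0def, hqp, eval_prod]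
      apply Finset.prod_ne_zero_iff.mpr
      intro j hj
      simp only [eval_sub, eval_X, eval_C]
      exact sub_ne_zero.mpr fun hh => (Finset.mem_erase.mp hj).1 (hzinj hh.symm)
    have hfac : c * (Real.exp (-(z i ^ 2)) * (q0 ^ 3 * (4 * q1 - 2 * z i * q0))) = 0 := by
      linear_combination h0
    have h5 : q0 ^ 3 * (4 * q1 - 2 * z i * q0) = 0 := by
      rcases mul_eq_zero.mp hfac with h | h
      · exact absurd h hcpos.ne'
      · rcases mul_eq_zero.mp h with h | h
        · exact absurd h (Real.exp_ne_zero _)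
        · exact h
    rcases mul_eq_zero.mp h5 with h | h
    · exact absurd ((pow_eq_zero_iff (by norm_num : (3 : ℕ) ≠ 0)).mp h) hq0ne
    · linarith
  have hpoly := crit_eq_hermite n hn z hzinj hcrit
  have hzroot : ∀ i, Polynomial.aeval (z i) (Polynomial.hermite n) = 0 := by
    intro i
    have h1 : (∏ j, (X - C (z j))).eval (z i) = 0 := by
      rw [eval_prod]
      apply Finset.prod_eq_zero (Finset.mem_univ i)
      simp
    rw [hpoly] at h1
    rwa [aeval_def, ← eval_map, algebraMap_int_eq]
  choose σ hσ using fun i => hall _ (hzroot i)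
  have hσinj : Function.Injective σ := fun a b hab => hzinj (by rw [hσ a, hσ b, hab])
  have hσbij : Function.Bijective σ := Finite.injective_iff_bijective.mp hσinj
  have hGzr : Gfun n z = Gfun n r := by
    have hz : z = r ∘ (Equiv.ofBijective σ hσbij) := funext fun i => hσ i
    rw [hz, Gfun_perm]
  have hGyz : Gfun n y ≤ Gfun n r := (hglobal y).trans_eq hGzr
  have hGy : 0 < Gfun n y := Gfun_pos hy
  have hlog : Real.log (Gfun n y) ≤ Real.log (Gfun n r) := Real.log_le_log hGy hGyz
  rw [Gfun_log hy, Gfun_log hrinj] at hlog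
  have hconv : ∀ w : Fin n → ℝ, (∑ i : Fin n, ∑ j ∈ Finset.Ioi i, Real.log (1 / |w i - w j|))
      = -∑ i : Fin n, ∑ j ∈ Finset.Ioi i, Real.log |w i - w j| := by
    intro w
    simp [one_div, Real.log_inv, Finset.sum_neg_distrib]
  rw [hconv r, hconv y]
  linarith
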